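/- Let F = (U,V,W,S) be a factor quadruple and suppose invertible matrices Q1 ∈ GL(r1), Q2 ∈ GL(r2), Q3 ∈ GL(r3) attain the infimum defining dist(F,F⋆). Then the following first-order optimality conditions hold: (U·Q1)ᵀ(U·Q1 − U⋆)·Σ⋆,1² = M1((Q1⁻¹,Q2⁻¹,Q3⁻¹)·S − S⋆)·M1((Q1⁻¹,Q2⁻¹,Q3⁻¹)·S)ᵀ, (V·Q2)ᵀ(V·Q2 − V⋆)·Σ⋆,2² = M2((Q1⁻¹,Q2⁻¹,Q3⁻¹)·S − S⋆)·M2((Q1⁻¹,Q2⁻¹,Q3⁻¹)·S)ᵀ, and (W·Q3)ᵀ(W·Q3 − W⋆)·Σ⋆,3² = M3((Q1⁻¹,Q2⁻¹,Q3⁻¹)·S − S⋆)·M3((Q1⁻¹,Q2⁻¹,Q3⁻¹)·S)ᵀ. -/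

import Mathlib

open Matrix MeasureTheory
open scoped Kronecker Classical BigOperators

namespace ScaledGD

noncomputable section

abbrev Tensor (n1 n2 n3 : ℕ) := Fin n1 → Fin n2 → Fin n3 → ℝ

/-- mode-1 matricization, columns indexed by (i3, i2) to match the Kronecker convention -/
def M1 {n1 n2 n3 : ℕ} (X : Tensor n1 n2 n3) : Matrix (Fin n1) (Fin n3 × Fin n2) ℝ :=
  Matrix.of fun i p => X i p.2 p.1

def M2 {n1 n2 n3 : ℕ} (X : Tensor n1 n2 n3) : Matrix (Fin n2) (Fin n3 × Fin n1) ℝ :=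
  Matrix.of fun i p => X p.2 i p.1

def M3 {n1 n2 n3 : ℕ} (X : Tensor n1 n2 n3) : Matrix (Fin n3) (Fin n2 × Fin n1) ℝ :=
  Matrix.of fun i p => X p.2 p.1 i

/-- Tucker product (A,B,C)·S -/
def tucker {m1 m2 m3 r1 r2 r3 : ℕ}
    (A : Matrix (Fin m1) (Fin r1) ℝ) (B : Matrix (Fin m2) (Fin r2) ℝ)
    (C : Matrix (Fin m3) (Fin r3) ℝ) (S : Tensor r1 r2 r3) : Tensor m1 m2 m3 :=
  fun i1 i2 i3 => ∑ j1, ∑ j2, ∑ j3, A i1 j1 * B i2 j2 * C i3 j3 * S j1 j2 j3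

/-- Frobenius norm of a matrix -/
def frob {m n : Type*} [Fintype m] [Fintype n] (A : Matrix m n ℝ) : ℝ :=
  Real.sqrt (∑ i, ∑ j, (A i j) ^ 2)

/-- Frobenius norm of a tensor -/
def frobT {n1 n2 n3 : ℕ} (X : Tensor n1 n2 n3) : ℝ :=
  Real.sqrt (∑ i1, ∑ i2, ∑ i3, (X i1 i2 i3) ^ 2)

def innerT {n1 n2 n3 : ℕ} (X Y : Tensor n1 n2 n3) : ℝ :=
  ∑ i1, ∑ i2, ∑ i3, X i1 i2 i3 * Y i1 i2 i3

def innerM {m n : Type*} [Fintype m] [Fintype n] (A B : Matrix m n ℝ) : ℝ :=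
  ∑ i, ∑ j, A i j * B i j

def rowNorm {m n : Type*} [Fintype n] (A : Matrix m n ℝ) (i : m) : ℝ :=
  Real.sqrt (∑ j, (A i j) ^ 2)

/-- ‖·‖_{2,∞}: largest ℓ2 norm of the rows -/
def norm2inf {m n : Type*} [Fintype m] [Fintype n] (A : Matrix m n ℝ) : ℝ :=
  ⨆ i, rowNorm A i

def vecNorm {n : Type*} [Fintype n] (x : n → ℝ) : ℝ :=
  Real.sqrt (∑ i, (x i) ^ 2)

/-- spectral norm -/
def opNorm {m n : Type*} [Fintype m] [Fintype n] (A : Matrix m n ℝ) : ℝ :=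
  sSup { c | ∃ x : n → ℝ, vecNorm x ≤ 1 ∧ c = vecNorm (A.mulVec x) }

/-- a factor quadruple -/
structure Quad (n1 n2 n3 r1 r2 r3 : ℕ) where
  U : Matrix (Fin n1) (Fin r1) ℝ
  V : Matrix (Fin n2) (Fin r2) ℝ
  W : Matrix (Fin n3) (Fin r3) ℝ
  S : Tensor r1 r2 r3

variable {n1 n2 n3 r1 r2 r3 : ℕ}

/-- the tensor (U,V,W)·S represented by a quadruple -/
def Quad.X (F : Quad n1 n2 n3 r1 r2 r3) : Tensor n1 n2 n3 := tucker F.U F.V F.W F.S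

def breveU (F : Quad n1 n2 n3 r1 r2 r3) : Matrix (Fin n3 × Fin n2) (Fin r1) ℝ :=
  (F.W ⊗ₖ F.V) * (M1 F.S)ᵀ

def breveV (F : Quad n1 n2 n3 r1 r2 r3) : Matrix (Fin n3 × Fin n1) (Fin r2) ℝ :=
  (F.W ⊗ₖ F.U) * (M2 F.S)ᵀ

def breveW (F : Quad n1 n2 n3 r1 r2 r3) : Matrix (Fin n2 × Fin n1) (Fin r3) ℝ :=
  (F.V ⊗ₖ F.U) * (M3 F.S)ᵀ


/-- a tangent-space style tensor (used in Lemma on tangent concentration) -/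
def tangentT (Fs : Quad n1 n2 n3 r1 r2 r3) (U' : Matrix (Fin n1) (Fin r1) ℝ)
    (V' : Matrix (Fin n2) (Fin r2) ℝ) (W' : Matrix (Fin n3) (Fin r3) ℝ)
    (S1 S2 S3 : Tensor r1 r2 r3) : Tensor n1 n2 n3 :=
  tucker U' Fs.V Fs.W S1 + tucker Fs.U V' Fs.W S2 + tucker Fs.U Fs.V W' S3

/-- squared scaled distance (infimum over invertible alignment matrices) -/
def distSq (σ1 : Fin r1 → ℝ) (σ2 : Fin r2 → ℝ) (σ3 : Fin r3 → ℝ)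
    (F Fs : Quad n1 n2 n3 r1 r2 r3) : ℝ :=
  sInf { d : ℝ | ∃ (Q1 : Matrix (Fin r1) (Fin r1) ℝ) (Q2 : Matrix (Fin r2) (Fin r2) ℝ)
      (Q3 : Matrix (Fin r3) (Fin r3) ℝ), IsUnit Q1.det ∧ IsUnit Q2.det ∧ IsUnit Q3.det ∧
      d = (frob ((F.U * Q1 - Fs.U) * Matrix.diagonal σ1)) ^ 2
        + (frob ((F.V * Q2 - Fs.V) * Matrix.diagonal σ2)) ^ 2
        + (frob ((F.W * Q3 - Fs.W) * Matrix.diagonal σ3)) ^ 2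
        + (frobT (tucker Q1⁻¹ Q2⁻¹ Q3⁻¹ F.S - Fs.S)) ^ 2 }

def dist (σ1 : Fin r1 → ℝ) (σ2 : Fin r2 → ℝ) (σ3 : Fin r3 → ℝ)
    (F Fs : Quad n1 n2 n3 r1 r2 r3) : ℝ :=
  Real.sqrt (distSq σ1 σ2 σ3 F Fs)

def firstVal {r : ℕ} (σ : Fin r → ℝ) : ℝ := if h : 0 < r then σ ⟨0, h⟩ else 0

def lastVal {r : ℕ} (σ : Fin r → ℝ) : ℝ := if h : 0 < r then σ ⟨r - 1, by omega⟩ else 0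

def sigmaMax (σ1 : Fin r1 → ℝ) (σ2 : Fin r2 → ℝ) (σ3 : Fin r3 → ℝ) : ℝ :=
  max (firstVal σ1) (max (firstVal σ2) (firstVal σ3))

def sigmaMin (σ1 : Fin r1 → ℝ) (σ2 : Fin r2 → ℝ) (σ3 : Fin r3 → ℝ) : ℝ :=
  min (lastVal σ1) (min (lastVal σ2) (lastVal σ3))

def kappa (σ1 : Fin r1 → ℝ) (σ2 : Fin r2 → ℝ) (σ3 : Fin r3 → ℝ) : ℝ :=
  sigmaMax σ1 σ2 σ3 / sigmaMin σ1 σ2 σ3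

def nmax (n1 n2 n3 : ℕ) : ℕ := max n1 (max n2 n3)

/-- the ground truth structural assumptions: orthonormal factors, and the core tensor
matricizations have Gram matrix `Σ⋆ₖ²` where the `σk` are positive and decreasing
(i.e. they are the nonzero singular values of `M_k(X⋆)` in decreasing order). -/
def GroundTruth (σ1 : Fin r1 → ℝ) (σ2 : Fin r2 → ℝ) (σ3 : Fin r3 → ℝ)
    (Fs : Quad n1 n2 n3 r1 r2 r3) : Prop :=
  (Fs.U)ᵀ * Fs.U = 1 ∧ (Fs.V)ᵀ * Fs.V = 1 ∧ (Fs.W)ᵀ * Fs.W = 1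
  ∧ M1 Fs.S * (M1 Fs.S)ᵀ = Matrix.diagonal (fun i => (σ1 i) ^ 2)
  ∧ M2 Fs.S * (M2 Fs.S)ᵀ = Matrix.diagonal (fun i => (σ2 i) ^ 2)
  ∧ M3 Fs.S * (M3 Fs.S)ᵀ = Matrix.diagonal (fun i => (σ3 i) ^ 2)
  ∧ (∀ i, 0 < σ1 i) ∧ (∀ i, 0 < σ2 i) ∧ (∀ i, 0 < σ3 i)
  ∧ (∀ i j : Fin r1, i ≤ j → σ1 j ≤ σ1 i)
  ∧ (∀ i j : Fin r2, i ≤ j → σ2 j ≤ σ2 i)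
  ∧ (∀ i j : Fin r3, i ≤ j → σ3 j ≤ σ3 i)

/-- μ-incoherence of the ground truth -/
def Incoherent (μ : ℝ) (Fs : Quad n1 n2 n3 r1 r2 r3) : Prop :=
  (n1 : ℝ) / r1 * (norm2inf Fs.U) ^ 2 ≤ μ
  ∧ (n2 : ℝ) / r2 * (norm2inf Fs.V) ^ 2 ≤ μ
  ∧ (n3 : ℝ) / r3 * (norm2inf Fs.W) ^ 2 ≤ μ

/-- one scaled gradient step driven by the "error" tensor E -/
def gdStep (η : ℝ) (E : Tensor n1 n2 n3) (F : Quad n1 n2 n3 r1 r2 r3) :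
    Quad n1 n2 n3 r1 r2 r3 where
  U := F.U - η • (M1 E * breveU F * ((breveU F)ᵀ * breveU F)⁻¹)
  V := F.V - η • (M2 E * breveV F * ((breveV F)ᵀ * breveV F)⁻¹)
  W := F.W - η • (M3 E * breveW F * ((breveW F)ᵀ * breveW F)⁻¹)
  S := F.S - η • tucker (((F.U)ᵀ * F.U)⁻¹ * (F.U)ᵀ) (((F.V)ᵀ * F.V)⁻¹ * (F.V)ᵀ)
      (((F.W)ᵀ * F.W)⁻¹ * (F.W)ᵀ) E

/-- row rescaling factor `1 ∧ B/x` (with the degenerate case x = 0 giving factor 1) -/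
def scaleFac (B : ℝ) (n : ℕ) (x : ℝ) : ℝ :=
  if Real.sqrt n * x = 0 then 1 else min 1 (B / (Real.sqrt n * x))

/-- the scaled projection P_B -/
def scaledProj (B : ℝ) (F : Quad n1 n2 n3 r1 r2 r3) : Quad n1 n2 n3 r1 r2 r3 where
  U := Matrix.of fun i j => scaleFac B n1 (rowNorm (F.U * (breveU F)ᵀ) i) * F.U i j
  V := Matrix.of fun i j => scaleFac B n2 (rowNorm (F.V * (breveV F)ᵀ) i) * F.V i j
  W := Matrix.of fun i j => scaleFac B n3 (rowNorm (F.W * (breveW F)ᵀ) i) * F.W i j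
  S := F.S

def IncoherenceCond (B : ℝ) (F : Quad n1 n2 n3 r1 r2 r3) : Prop :=
  Real.sqrt n1 * norm2inf (F.U * (breveU F)ᵀ) ≤ B
  ∧ Real.sqrt n2 * norm2inf (F.V * (breveV F)ᵀ) ≤ B
  ∧ Real.sqrt n3 * norm2inf (F.W * (breveW F)ᵀ) ≤ B

/-- P_Ω : keep the observed entries, zero elsewhere -/
def sampleT (ω : Fin n1 × Fin n2 × Fin n3 → Bool) (X : Tensor n1 n2 n3) : Tensor n1 n2 n3 :=
  fun i1 i2 i3 => if ω (i1, i2, i3) then X i1 i2 i3 else 0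

/-- Bernoulli(p) distribution on Bool -/
def bernoulliBool (p : ℝ) : Measure Bool :=
  (Real.toNNReal p) • Measure.dirac true + (Real.toNNReal (1 - p)) • Measure.dirac false

instance (p : ℝ) : IsFiniteMeasure (bernoulliBool p) := by
  unfold bernoulliBool; infer_instance

/-- i.i.d. Bernoulli sampling of the indices -/
def berMeasure (n1 n2 n3 : ℕ) (p : ℝ) : Measure (Fin n1 × Fin n2 × Fin n3 → Bool) :=
  Measure.pi fun _ => bernoulliBool p

/-- zero out the diagonal of a square matrix -/
def offdiag {N : Type*} [DecidableEq N] (G : Matrix N N ℝ) : Matrix N N ℝ :=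
  Matrix.of fun i j => if i = j then 0 else G i j

/-- `U` consists of (some choice of) top-r eigenvectors of the symmetric matrix G:
orthonormal columns which are eigenvectors, such that any eigenvector orthogonal to
all columns of U has eigenvalue no larger than the eigenvalues of the columns. -/
def IsTopEigenvectors {N : Type*} [Fintype N] {r : ℕ} (G : Matrix N N ℝ)
    (U : Matrix N (Fin r) ℝ) : Prop :=
  Uᵀ * U = 1 ∧ ∃ μ : Fin r → ℝ,
    (∀ j, G.mulVec (fun i => U i j) = μ j • (fun i => U i j))
    ∧ ∀ (v : N → ℝ) (lam : ℝ), v ≠ 0 → G.mulVec v = lam • v →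
        (∀ j, ∑ i, v i * U i j = 0) → ∀ j, lam ≤ μ j

/-- spectral initialization (before projection) for tensor completion -/
def SpectralInitTC (p : ℝ) (Y : Tensor n1 n2 n3) (F : Quad n1 n2 n3 r1 r2 r3) : Prop :=
  IsTopEigenvectors (offdiag ((p ^ 2)⁻¹ • (M1 Y * (M1 Y)ᵀ))) F.U
  ∧ IsTopEigenvectors (offdiag ((p ^ 2)⁻¹ • (M2 Y * (M2 Y)ᵀ))) F.V
  ∧ IsTopEigenvectors (offdiag ((p ^ 2)⁻¹ • (M3 Y * (M3 Y)ᵀ))) F.W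
  ∧ F.S = p⁻¹ • tucker (F.U)ᵀ (F.V)ᵀ (F.W)ᵀ Y

/-- HOSVD with multilinear rank (r1,r2,r3) -/
def IsHOSVD (X : Tensor n1 n2 n3) (F : Quad n1 n2 n3 r1 r2 r3) : Prop :=
  IsTopEigenvectors (M1 X * (M1 X)ᵀ) F.U
  ∧ IsTopEigenvectors (M2 X * (M2 X)ᵀ) F.V
  ∧ IsTopEigenvectors (M3 X * (M3 X)ᵀ) F.W
  ∧ F.S = tucker (F.U)ᵀ (F.V)ᵀ (F.W)ᵀ X

/-- the measurement map A -/
def Amap {m : ℕ} (Ad : Fin m → Tensor n1 n2 n3) (X : Tensor n1 n2 n3) : Fin m → ℝ :=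
  fun i => innerT (Ad i) X

/-- the adjoint A* -/
def Aadj {m : ℕ} (Ad : Fin m → Tensor n1 n2 n3) (y : Fin m → ℝ) : Tensor n1 n2 n3 :=
  fun i1 i2 i3 => ∑ i, y i * Ad i i1 i2 i3

/-- Gaussian design: all entries of the m measurement tensors are i.i.d. N(0,1/m) -/
def gaussDesign (m n1 n2 n3 : ℕ) : Measure (Fin m → Tensor n1 n2 n3) :=
  Measure.pi fun _ => Measure.pi fun _ => Measure.pi fun _ => Measure.pi fun _ =>
    ProbabilityTheory.gaussianReal 0 (m : NNReal)⁻¹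

/-- tensor restricted isometry property -/
def TRIP {m : ℕ} (Ad : Fin m → Tensor n1 n2 n3) (r1' r2' r3' : ℕ) (δ : ℝ) : Prop :=
  ∀ X : Tensor n1 n2 n3, (M1 X).rank ≤ r1' → (M2 X).rank ≤ r2' → (M3 X).rank ≤ r3' →
    (1 - δ) * (frobT X) ^ 2 ≤ ∑ i, (innerT (Ad i) X) ^ 2
    ∧ ∑ i, (innerT (Ad i) X) ^ 2 ≤ (1 + δ) * (frobT X) ^ 2

/-- ε-closeness in the aligned sense -/
def alignedClose (σ1 : Fin r1 → ℝ) (σ2 : Fin r2 → ℝ) (σ3 : Fin r3 → ℝ)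
    (F Fs : Quad n1 n2 n3 r1 r2 r3) (ε : ℝ) : Prop :=
  (frob ((F.U - Fs.U) * Matrix.diagonal σ1)) ^ 2
  + (frob ((F.V - Fs.V) * Matrix.diagonal σ2)) ^ 2
  + (frob ((F.W - Fs.W) * Matrix.diagonal σ3)) ^ 2
  + (frobT (F.S - Fs.S)) ^ 2 ≤ ε ^ 2 * (sigmaMin σ1 σ2 σ3) ^ 2

/-- the alignment equations -/
def AlignEqs (σ1 : Fin r1 → ℝ) (σ2 : Fin r2 → ℝ) (σ3 : Fin r3 → ℝ)
    (F Fs : Quad n1 n2 n3 r1 r2 r3) : Prop :=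
  (F.U)ᵀ * (F.U - Fs.U) * (Matrix.diagonal σ1 * Matrix.diagonal σ1)
      = M1 (F.S - Fs.S) * (M1 F.S)ᵀ
  ∧ (F.V)ᵀ * (F.V - Fs.V) * (Matrix.diagonal σ2 * Matrix.diagonal σ2)
      = M2 (F.S - Fs.S) * (M2 F.S)ᵀ
  ∧ (F.W)ᵀ * (F.W - Fs.W) * (Matrix.diagonal σ3 * Matrix.diagonal σ3)
      = M3 (F.S - Fs.S) * (M3 F.S)ᵀ

/-- `(UᵀU)^{-1/2}`: inverse of the positive semidefinite square root of the Gram matrix -/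
def invSqrtGram {m r : ℕ} (U : Matrix (Fin m) (Fin r) ℝ) : Matrix (Fin r) (Fin r) ℝ :=
  if h : (Uᵀ * U).PosSemidef then
    ((h.1.eigenvectorUnitary : Matrix (Fin r) (Fin r) ℝ) *
      Matrix.diagonal ((RCLike.ofReal : ℝ → ℝ) ∘ Real.sqrt ∘ h.1.eigenvalues) *
      (star h.1.eigenvectorUnitary : Matrix (Fin r) (Fin r) ℝ))⁻¹ else 1

end

section Aux

open Filter

private lemma sum_rot4 {α β γ δ : Type*} [Fintype α] [Fintype β] [Fintype γ] [Fintype δ]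
    (f : α → β → γ → δ → ℝ) :
    ∑ a, ∑ b, ∑ c, ∑ d, f a b c d = ∑ d, ∑ a, ∑ b, ∑ c, f a b c d :=
  calc ∑ a, ∑ b, ∑ c, ∑ d, f a b c d
      = ∑ a, ∑ b, ∑ d, ∑ c, f a b c d :=
        Finset.sum_congr rfl fun a _ => Finset.sum_congr rfl fun b _ => Finset.sum_comm
    _ = ∑ a, ∑ d, ∑ b, ∑ c, f a b c d :=
        Finset.sum_congr rfl fun a _ => Finset.sum_comm
    _ = ∑ d, ∑ a, ∑ b, ∑ c, f a b c d := Finset.sum_comm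

private lemma inv_entry_contAt {r : ℕ} (A : Matrix (Fin r) (Fin r) ℝ) (b c : Fin r) :
    ContinuousAt (fun t : ℝ => ((1 + t • A)⁻¹ : Matrix (Fin r) (Fin r) ℝ) b c) 0 := by
  have hM : Continuous fun t : ℝ => (1 + t • A : Matrix (Fin r) (Fin r) ℝ) := by
    apply continuous_matrix; intro i j
    simp only [Matrix.add_apply, Matrix.smul_apply, smul_eq_mul]
    exact continuous_const.add (continuous_id.mul continuous_const)
  have hdet : Continuous fun t : ℝ => (1 + t • A : Matrix (Fin r) (Fin r) ℝ).det :=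
    hM.matrix_det
  have hadj : Continuous fun t : ℝ => (1 + t • A : Matrix (Fin r) (Fin r) ℝ).adjugate b c :=
    (continuous_apply c).comp ((continuous_apply b).comp hM.matrix_adjugate)
  have h1 : ContinuousAt (fun t : ℝ => ((1 + t • A : Matrix (Fin r) (Fin r) ℝ).det)⁻¹) 0 := by
    apply ContinuousAt.comp (x := (0:ℝ)) _ hdet.continuousAt
    apply continuousAt_inv₀
    simp
  have h2 : ContinuousAt (fun t : ℝ =>
      ((1 + t • A : Matrix (Fin r) (Fin r) ℝ).det)⁻¹
        * (1 + t • A : Matrix (Fin r) (Fin r) ℝ).adjugate b c) 0 :=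
    h1.mul hadj.continuousAt
  have hcongr : (fun t : ℝ => ((1 + t • A)⁻¹ : Matrix (Fin r) (Fin r) ℝ) b c)
      = fun t : ℝ => ((1 + t • A : Matrix (Fin r) (Fin r) ℝ).det)⁻¹
        * (1 + t • A : Matrix (Fin r) (Fin r) ℝ).adjugate b c := by
    funext t
    rw [Matrix.inv_def, Matrix.smul_apply, smul_eq_mul, Ring.inverse_eq_inv']
  rw [hcongr]; exact h2

private lemma inv_entry_deriv {r : ℕ} (A : Matrix (Fin r) (Fin r) ℝ) (i a : Fin r) :
    HasDerivAt (fun t : ℝ => ((1 + t • A)⁻¹ : Matrix (Fin r) (Fin r) ℝ) i a)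
      (-(A i a)) 0 := by
  have hM : Continuous fun t : ℝ => (1 + t • A : Matrix (Fin r) (Fin r) ℝ) := by
    apply continuous_matrix; intro i j
    simp only [Matrix.add_apply, Matrix.smul_apply, smul_eq_mul]
    exact continuous_const.add (continuous_id.mul continuous_const)
  have hdetne : ∀ᶠ t : ℝ in nhds 0, (1 + t • A : Matrix (Fin r) (Fin r) ℝ).det ≠ 0 := by
    apply hM.matrix_det.continuousAt.eventually_ne
    simp
  set g : ℝ → ℝ := fun t => -(∑ b, A i b * ((1 + t • A)⁻¹ : Matrix (Fin r) (Fin r) ℝ) b a)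
    with hg
  have hgcont : ContinuousAt g 0 := by
    apply ContinuousAt.neg
    exact tendsto_finset_sum _ fun b _ => continuousAt_const.mul (inv_entry_contAt A b a)
  have hg0 : g 0 = -(A i a) := by
    simp [hg, Matrix.one_apply, mul_ite, Finset.sum_ite_eq]
  rw [hasDerivAt_iff_tendsto_slope]
  have hid : ∀ t : ℝ, (1 + t • A : Matrix (Fin r) (Fin r) ℝ).det ≠ 0 →
      ((1 + t • A)⁻¹ : Matrix (Fin r) (Fin r) ℝ)
        = 1 - t • (A * (1 + t • A)⁻¹) := by
    intro t ht
    have hu : IsUnit (1 + t • A : Matrix (Fin r) (Fin r) ℝ).det := isUnit_iff_ne_zero.2 ht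
    have h1 : (1 + t • A) * ((1 + t • A)⁻¹ : Matrix (Fin r) (Fin r) ℝ) = 1 :=
      Matrix.mul_nonsing_inv _ hu
    calc ((1 + t • A)⁻¹ : Matrix (Fin r) (Fin r) ℝ)
        = ((1 + t • A) - t • A) * (1 + t • A)⁻¹ := by rw [add_sub_cancel_right, one_mul]
      _ = 1 - t • (A * (1 + t • A)⁻¹) := by rw [sub_mul, h1, Matrix.smul_mul]
  have hev : ∀ᶠ t in nhdsWithin (0:ℝ) {(0:ℝ)}ᶜ,
      g t = slope (fun t : ℝ => ((1 + t • A)⁻¹ : Matrix (Fin r) (Fin r) ℝ) i a) 0 t := by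
    filter_upwards [hdetne.filter_mono nhdsWithin_le_nhds,
      self_mem_nhdsWithin] with t ht ht0
    have ht0' : (t : ℝ) ≠ 0 := ht0
    rw [slope_def_field, hid t ht]
    simp only [zero_smul, add_zero, inv_one, Matrix.sub_apply, Matrix.smul_apply,
      smul_eq_mul, Matrix.one_apply, hg, Matrix.mul_apply]
    field_simp
    ring
  apply Tendsto.congr' hev
  rw [← hg0]
  exact hgcont.tendsto.mono_left nhdsWithin_le_nhds

private lemma frob_sq {m n : Type*} [Fintype m] [Fintype n] (A : Matrix m n ℝ) :
    (frob A) ^ 2 = ∑ i, ∑ j, (A i j) ^ 2 :=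
  Real.sq_sqrt (by positivity)

private lemma key {n r : ℕ} {J : Type*} [Fintype J]
    (Ut Us : Matrix (Fin n) (Fin r) ℝ) (σ : Fin r → ℝ)
    (Tm Sm : Matrix (Fin r) J ℝ)
    (hmin : ∀ A : Matrix (Fin r) (Fin r) ℝ, ∀ᶠ t : ℝ in nhds 0,
      (frob ((Ut - Us) * Matrix.diagonal σ))^2 + (frob (Tm - Sm))^2
      ≤ (frob ((Ut * (1 + t • A) - Us) * Matrix.diagonal σ))^2
        + (frob ((1 + t • A)⁻¹ * Tm - Sm))^2) :
    Utᵀ * (Ut - Us) * (Matrix.diagonal σ * Matrix.diagonal σ) = (Tm - Sm) * Tmᵀ := by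
  have main : ∀ A : Matrix (Fin r) (Fin r) ℝ,
      ∑ i, ∑ j, ((Ut - Us) * Matrix.diagonal σ) i j * ((Ut * A * Matrix.diagonal σ) i j)
      = ∑ i, ∑ p, (Tm i p - Sm i p) * (∑ c, A i c * Tm c p) := by
    intro A
    set a : Matrix (Fin n) (Fin r) ℝ := (Ut - Us) * Matrix.diagonal σ with ha
    set b : Matrix (Fin n) (Fin r) ℝ := Ut * A * Matrix.diagonal σ with hb
    set Ff : ℝ → ℝ := fun t =>
      (∑ i, ∑ j, (a i j + t * b i j)^2)
      + ∑ i, ∑ p, ((∑ c, ((1 + t • A)⁻¹ : Matrix (Fin r) (Fin r) ℝ) i c * Tm c p) - Sm i p)^2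
      with hFf
    have hm : ∀ t : ℝ, (Ut * (1 + t • A) - Us) * Matrix.diagonal σ = a + t • b := by
      intro t
      rw [ha, hb]
      rw [Matrix.mul_add, Matrix.mul_one, Matrix.mul_smul, Matrix.sub_mul, Matrix.sub_mul,
        Matrix.add_mul, Matrix.smul_mul]
      abel
    have hFeq : ∀ t : ℝ,
        (frob ((Ut * (1 + t • A) - Us) * Matrix.diagonal σ))^2
        + (frob ((1 + t • A)⁻¹ * Tm - Sm))^2 = Ff t := by
      intro t
      rw [frob_sq, frob_sq, hm t, hFf]
      simp only [Matrix.add_apply, Matrix.smul_apply, smul_eq_mul, Matrix.sub_apply,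
        Matrix.mul_apply]
    have hF0 : Ff 0 = (frob a)^2 + (frob (Tm - Sm))^2 := by
      rw [hFf, frob_sq, frob_sq]
      simp only [zero_mul, add_zero, zero_smul, inv_one, Matrix.sub_apply, Matrix.one_apply]
      congr 1
      refine Finset.sum_congr rfl fun i _ => Finset.sum_congr rfl fun p _ => ?_
      congr 1
      simp [ite_mul, Finset.sum_ite_eq]
    have hloc : IsLocalMin Ff 0 := by
      filter_upwards [hmin A] with t ht
      rw [← hFeq t, hF0]
      exact ht
    have hterm1 : ∀ (i : Fin n) (j : Fin r),
        HasDerivAt (fun t : ℝ => (a i j + t * b i j)^2) (2 * (a i j * b i j)) 0 := by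
      intro i j
      have h := (((hasDerivAt_id (0:ℝ)).mul_const (b i j)).const_add (a i j)).fun_pow 2
      refine h.congr_deriv ?_
      simp only [id_eq]
      push_cast
      ring
    have hin : ∀ (i : Fin r) (p : J),
        HasDerivAt (fun t : ℝ =>
            (∑ c, ((1 + t • A)⁻¹ : Matrix (Fin r) (Fin r) ℝ) i c * Tm c p) - Sm i p)
          (∑ c, -(A i c) * Tm c p) 0 :=
      fun i p => (HasDerivAt.fun_sum fun c _ => (inv_entry_deriv A i c).mul_const (Tm c p)).sub_const _
    have hterm2 : ∀ (i : Fin r) (p : J),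
        HasDerivAt (fun t : ℝ =>
            ((∑ c, ((1 + t • A)⁻¹ : Matrix (Fin r) (Fin r) ℝ) i c * Tm c p) - Sm i p)^2)
          ((-2) * ((Tm i p - Sm i p) * (∑ c, A i c * Tm c p))) 0 := by
      intro i p
      have h := (hin i p).fun_pow 2
      have hv : (∑ c, ((1 + (0:ℝ) • A)⁻¹ : Matrix (Fin r) (Fin r) ℝ) i c * Tm c p) = Tm i p := by
        simp [Matrix.one_apply, ite_mul, Finset.sum_ite_eq]
      rw [hv] at h
      refine h.congr_deriv ?_
      push_cast
      simp only [neg_mul, Finset.sum_neg_distrib]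
      ring
    have hder : HasDerivAt Ff
        ((∑ i, ∑ j, 2 * (a i j * b i j))
          + ∑ i, ∑ p, (-2) * ((Tm i p - Sm i p) * (∑ c, A i c * Tm c p))) 0 := by
      rw [hFf]
      exact (HasDerivAt.fun_sum fun i _ => HasDerivAt.fun_sum fun j _ => hterm1 i j).add
        (HasDerivAt.fun_sum fun i _ => HasDerivAt.fun_sum fun p _ => hterm2 i p)
    have h0 := hloc.hasDerivAt_eq_zero hder
    simp only [← Finset.mul_sum] at h0
    linarith
  ext i k
  have h := main (Matrix.single i k 1)
  simp only [Matrix.mul_apply, Matrix.mul_diagonal, Matrix.sub_apply, Matrix.single,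
    Matrix.of_apply, Matrix.diagonal_apply, Matrix.transpose_apply, mul_ite, ite_mul,
    mul_zero, zero_mul, mul_one, one_mul, ite_and,
    Finset.sum_ite_eq, Finset.sum_ite_eq', Finset.mem_univ, if_true] at h ⊢
  have hL : (∑ x, Ut x i * (Ut x k - Us x k)) * (σ k * σ k)
      = ∑ x, (Ut x k - Us x k) * σ k * (Ut x i * σ k) := by
    rw [Finset.sum_mul]; exact Finset.sum_congr rfl fun x _ => by ring
  rw [hL, h]
  have hx : ∀ x : Fin r, (∑ x_1 : J, (Tm x x_1 - Sm x x_1)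
        * ∑ x_2 : Fin r, if i = x then if k = x_2 then Tm x_2 x_1 else 0 else 0)
      = if i = x then ∑ x_1 : J, (Tm x x_1 - Sm x x_1) * Tm k x_1 else 0 := by
    intro x; by_cases hix : i = x <;> simp [hix, Finset.sum_ite_eq]
  simp only [hx, Finset.sum_ite_eq, Finset.mem_univ, if_true]

end Aux

section Glue

open Filter

private lemma det_ne_ev {r : ℕ} (A : Matrix (Fin r) (Fin r) ℝ) :
    ∀ᶠ t : ℝ in nhds 0, ((1 : Matrix (Fin r) (Fin r) ℝ) + t • A).det ≠ 0 := by
  have hM : Continuous fun t : ℝ => (1 + t • A : Matrix (Fin r) (Fin r) ℝ) := by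
    apply continuous_matrix; intro i j
    simp only [Matrix.add_apply, Matrix.smul_apply, smul_eq_mul]
    exact continuous_const.add (continuous_id.mul continuous_const)
  apply hM.matrix_det.continuousAt.eventually_ne
  simp

private lemma sum_rev3 {α β γ : Type*} [Fintype α] [Fintype β] [Fintype γ]
    (f : α → β → γ → ℝ) :
    ∑ a, ∑ b, ∑ c, f a b c = ∑ c, ∑ b, ∑ a, f a b c :=
  calc ∑ a, ∑ b, ∑ c, f a b c
      = ∑ a, ∑ c, ∑ b, f a b c := Finset.sum_congr rfl fun _ _ => Finset.sum_comm
    _ = ∑ c, ∑ a, ∑ b, f a b c := Finset.sum_comm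
    _ = ∑ c, ∑ b, ∑ a, f a b c := Finset.sum_congr rfl fun _ _ => Finset.sum_comm

private lemma sum_rot3 {α β γ : Type*} [Fintype α] [Fintype β] [Fintype γ]
    (f : α → β → γ → ℝ) :
    ∑ a, ∑ b, ∑ c, f a b c = ∑ b, ∑ c, ∑ a, f a b c :=
  calc ∑ a, ∑ b, ∑ c, f a b c
      = ∑ b, ∑ a, ∑ c, f a b c := Finset.sum_comm
    _ = ∑ b, ∑ c, ∑ a, f a b c := Finset.sum_congr rfl fun _ _ => Finset.sum_comm

private lemma frobT_M1 {n1 n2 n3 : ℕ} (X : Tensor n1 n2 n3) : frobT X = frob (M1 X) := by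
  unfold frobT frob
  congr 1
  refine Finset.sum_congr rfl fun i _ => ?_
  rw [Fintype.sum_prod_type]
  simp only [M1, Matrix.of_apply]
  exact Finset.sum_comm

private lemma frobT_M2 {n1 n2 n3 : ℕ} (X : Tensor n1 n2 n3) : frobT X = frob (M2 X) := by
  unfold frobT frob
  congr 1
  rw [sum_rot3 (fun i1 i2 i3 => (X i1 i2 i3)^2)]
  refine Finset.sum_congr rfl fun i2 _ => ?_
  rw [Fintype.sum_prod_type]
  simp only [M2, Matrix.of_apply]

private lemma frobT_M3 {n1 n2 n3 : ℕ} (X : Tensor n1 n2 n3) : frobT X = frob (M3 X) := by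
  unfold frobT frob
  congr 1
  rw [sum_rev3 (fun i1 i2 i3 => (X i1 i2 i3)^2)]
  refine Finset.sum_congr rfl fun i3 _ => ?_
  rw [Fintype.sum_prod_type]
  simp only [M3, Matrix.of_apply]

private lemma M1_sub {n1 n2 n3 : ℕ} (X Y : Tensor n1 n2 n3) : M1 (X - Y) = M1 X - M1 Y := rfl
private lemma M2_sub {n1 n2 n3 : ℕ} (X Y : Tensor n1 n2 n3) : M2 (X - Y) = M2 X - M2 Y := rfl
private lemma M3_sub {n1 n2 n3 : ℕ} (X Y : Tensor n1 n2 n3) : M3 (X - Y) = M3 X - M3 Y := rfl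

private lemma M1_mul {r1 r2 r3 : ℕ}
    (X Y : Matrix (Fin r1) (Fin r1) ℝ) (B : Matrix (Fin r2) (Fin r2) ℝ)
    (C : Matrix (Fin r3) (Fin r3) ℝ) (S : Tensor r1 r2 r3) :
    M1 (tucker (X * Y) B C S) = X * M1 (tucker Y B C S) := by
  ext i p
  simp only [M1, tucker, Matrix.of_apply, Matrix.mul_apply, Finset.sum_mul, Finset.mul_sum]
  rw [sum_rot4]
  exact Finset.sum_congr rfl fun d _ => Finset.sum_congr rfl fun a _ =>
    Finset.sum_congr rfl fun b _ => Finset.sum_congr rfl fun c _ => by ring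

private lemma M2_mul {r1 r2 r3 : ℕ}
    (P : Matrix (Fin r1) (Fin r1) ℝ) (X Y : Matrix (Fin r2) (Fin r2) ℝ)
    (C : Matrix (Fin r3) (Fin r3) ℝ) (S : Tensor r1 r2 r3) :
    M2 (tucker P (X * Y) C S) = X * M2 (tucker P Y C S) := by
  ext i p
  simp only [M2, tucker, Matrix.of_apply, Matrix.mul_apply, Finset.sum_mul, Finset.mul_sum]
  rw [sum_rot4]
  exact Finset.sum_congr rfl fun d _ => Finset.sum_congr rfl fun a _ =>
    Finset.sum_congr rfl fun b _ => Finset.sum_congr rfl fun c _ => by ring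

private lemma M3_mul {r1 r2 r3 : ℕ}
    (P : Matrix (Fin r1) (Fin r1) ℝ) (B : Matrix (Fin r2) (Fin r2) ℝ)
    (X Y : Matrix (Fin r3) (Fin r3) ℝ) (S : Tensor r1 r2 r3) :
    M3 (tucker P B (X * Y) S) = X * M3 (tucker P B Y S) := by
  ext i p
  simp only [M3, tucker, Matrix.of_apply, Matrix.mul_apply, Finset.sum_mul, Finset.mul_sum]
  rw [sum_rot4]
  exact Finset.sum_congr rfl fun d _ => Finset.sum_congr rfl fun a _ =>
    Finset.sum_congr rfl fun b _ => Finset.sum_congr rfl fun c _ => by ring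

end Glue


/-- first-order optimality conditions for the optimal alignment matrices
(Lemma 7). -/
theorem optimal_alignment_criteria
    (n1 n2 n3 r1 r2 r3 : ℕ) (hn1 : 0 < n1) (hn2 : 0 < n2) (hn3 : 0 < n3)
    (hr1 : 0 < r1) (hr2 : 0 < r2) (hr3 : 0 < r3)
    (σ1 : Fin r1 → ℝ) (σ2 : Fin r2 → ℝ) (σ3 : Fin r3 → ℝ)
    (Fs : Quad n1 n2 n3 r1 r2 r3) (hGT : GroundTruth σ1 σ2 σ3 Fs)
    (F : Quad n1 n2 n3 r1 r2 r3)
    (Q1 : Matrix (Fin r1) (Fin r1) ℝ) (Q2 : Matrix (Fin r2) (Fin r2) ℝ)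
    (Q3 : Matrix (Fin r3) (Fin r3) ℝ)
    (hQ1 : IsUnit Q1.det) (hQ2 : IsUnit Q2.det) (hQ3 : IsUnit Q3.det)
    (hopt : (frob ((F.U * Q1 - Fs.U) * Matrix.diagonal σ1)) ^ 2
        + (frob ((F.V * Q2 - Fs.V) * Matrix.diagonal σ2)) ^ 2
        + (frob ((F.W * Q3 - Fs.W) * Matrix.diagonal σ3)) ^ 2
        + (frobT (tucker Q1⁻¹ Q2⁻¹ Q3⁻¹ F.S - Fs.S)) ^ 2
      = distSq σ1 σ2 σ3 F Fs) :
    (F.U * Q1)ᵀ * (F.U * Q1 - Fs.U) * (Matrix.diagonal σ1 * Matrix.diagonal σ1)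
        = M1 (tucker Q1⁻¹ Q2⁻¹ Q3⁻¹ F.S - Fs.S) * (M1 (tucker Q1⁻¹ Q2⁻¹ Q3⁻¹ F.S))ᵀ
    ∧ (F.V * Q2)ᵀ * (F.V * Q2 - Fs.V) * (Matrix.diagonal σ2 * Matrix.diagonal σ2)
        = M2 (tucker Q1⁻¹ Q2⁻¹ Q3⁻¹ F.S - Fs.S) * (M2 (tucker Q1⁻¹ Q2⁻¹ Q3⁻¹ F.S))ᵀ
    ∧ (F.W * Q3)ᵀ * (F.W * Q3 - Fs.W) * (Matrix.diagonal σ3 * Matrix.diagonal σ3)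
        = M3 (tucker Q1⁻¹ Q2⁻¹ Q3⁻¹ F.S - Fs.S) * (M3 (tucker Q1⁻¹ Q2⁻¹ Q3⁻¹ F.S))ᵀ := by
  have hbdd : BddBelow { d : ℝ | ∃ (Q1 : Matrix (Fin r1) (Fin r1) ℝ)
      (Q2 : Matrix (Fin r2) (Fin r2) ℝ)
      (Q3 : Matrix (Fin r3) (Fin r3) ℝ), IsUnit Q1.det ∧ IsUnit Q2.det ∧ IsUnit Q3.det ∧
      d = (frob ((F.U * Q1 - Fs.U) * Matrix.diagonal σ1)) ^ 2
        + (frob ((F.V * Q2 - Fs.V) * Matrix.diagonal σ2)) ^ 2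
        + (frob ((F.W * Q3 - Fs.W) * Matrix.diagonal σ3)) ^ 2
        + (frobT (tucker Q1⁻¹ Q2⁻¹ Q3⁻¹ F.S - Fs.S)) ^ 2 } := by
    refine ⟨0, ?_⟩
    rintro d ⟨a1, a2, a3, -, -, -, rfl⟩
    positivity
  have hle : ∀ (Q1' : Matrix (Fin r1) (Fin r1) ℝ) (Q2' : Matrix (Fin r2) (Fin r2) ℝ)
      (Q3' : Matrix (Fin r3) (Fin r3) ℝ), IsUnit Q1'.det → IsUnit Q2'.det → IsUnit Q3'.det →
      (frob ((F.U * Q1 - Fs.U) * Matrix.diagonal σ1)) ^ 2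
        + (frob ((F.V * Q2 - Fs.V) * Matrix.diagonal σ2)) ^ 2
        + (frob ((F.W * Q3 - Fs.W) * Matrix.diagonal σ3)) ^ 2
        + (frobT (tucker Q1⁻¹ Q2⁻¹ Q3⁻¹ F.S - Fs.S)) ^ 2
      ≤ (frob ((F.U * Q1' - Fs.U) * Matrix.diagonal σ1)) ^ 2
        + (frob ((F.V * Q2' - Fs.V) * Matrix.diagonal σ2)) ^ 2
        + (frob ((F.W * Q3' - Fs.W) * Matrix.diagonal σ3)) ^ 2
        + (frobT (tucker Q1'⁻¹ Q2'⁻¹ Q3'⁻¹ F.S - Fs.S)) ^ 2 := by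
    intro Q1' Q2' Q3' h1 h2 h3
    rw [hopt]
    exact csInf_le hbdd ⟨Q1', Q2', Q3', h1, h2, h3, rfl⟩
  refine ⟨?_, ?_, ?_⟩
  · rw [M1_sub]
    apply key (F.U * Q1) Fs.U σ1 (M1 (tucker Q1⁻¹ Q2⁻¹ Q3⁻¹ F.S)) (M1 Fs.S)
    intro A
    filter_upwards [det_ne_ev A] with t ht
    have hu : IsUnit (Q1 * (1 + t • A)).det := by
      rw [Matrix.det_mul]; exact hQ1.mul (isUnit_iff_ne_zero.2 ht)
    have h := hle (Q1 * (1 + t • A)) Q2 Q3 hu hQ2 hQ3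
    rw [← Matrix.mul_assoc] at h
    have e2 : frobT (tucker (Q1 * (1 + t • A))⁻¹ Q2⁻¹ Q3⁻¹ F.S - Fs.S)
        = frob ((1 + t • A)⁻¹ * M1 (tucker Q1⁻¹ Q2⁻¹ Q3⁻¹ F.S) - M1 Fs.S) := by
      rw [Matrix.mul_inv_rev, frobT_M1, M1_sub, M1_mul]
    have e3 : frobT (tucker Q1⁻¹ Q2⁻¹ Q3⁻¹ F.S - Fs.S)
        = frob (M1 (tucker Q1⁻¹ Q2⁻¹ Q3⁻¹ F.S) - M1 Fs.S) := by
      rw [frobT_M1, M1_sub]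
    rw [e2, e3] at h
    linarith
  · rw [M2_sub]
    apply key (F.V * Q2) Fs.V σ2 (M2 (tucker Q1⁻¹ Q2⁻¹ Q3⁻¹ F.S)) (M2 Fs.S)
    intro A
    filter_upwards [det_ne_ev A] with t ht
    have hu : IsUnit (Q2 * (1 + t • A)).det := by
      rw [Matrix.det_mul]; exact hQ2.mul (isUnit_iff_ne_zero.2 ht)
    have h := hle Q1 (Q2 * (1 + t • A)) Q3 hQ1 hu hQ3
    rw [← Matrix.mul_assoc] at h
    have e2 : frobT (tucker Q1⁻¹ (Q2 * (1 + t • A))⁻¹ Q3⁻¹ F.S - Fs.S)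
        = frob ((1 + t • A)⁻¹ * M2 (tucker Q1⁻¹ Q2⁻¹ Q3⁻¹ F.S) - M2 Fs.S) := by
      rw [Matrix.mul_inv_rev, frobT_M2, M2_sub, M2_mul]
    have e3 : frobT (tucker Q1⁻¹ Q2⁻¹ Q3⁻¹ F.S - Fs.S)
        = frob (M2 (tucker Q1⁻¹ Q2⁻¹ Q3⁻¹ F.S) - M2 Fs.S) := by
      rw [frobT_M2, M2_sub]
    rw [e2, e3] at h
    linarith
  · rw [M3_sub]
    apply key (F.W * Q3) Fs.W σ3 (M3 (tucker Q1⁻¹ Q2⁻¹ Q3⁻¹ F.S)) (M3 Fs.S)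
    intro A
    filter_upwards [det_ne_ev A] with t ht
    have hu : IsUnit (Q3 * (1 + t • A)).det := by
      rw [Matrix.det_mul]; exact hQ3.mul (isUnit_iff_ne_zero.2 ht)
    have h := hle Q1 Q2 (Q3 * (1 + t • A)) hQ1 hQ2 hu
    rw [← Matrix.mul_assoc] at h
    have e2 : frobT (tucker Q1⁻¹ Q2⁻¹ (Q3 * (1 + t • A))⁻¹ F.S - Fs.S)
        = frob ((1 + t • A)⁻¹ * M3 (tucker Q1⁻¹ Q2⁻¹ Q3⁻¹ F.S) - M3 Fs.S) := by
      rw [Matrix.mul_inv_rev, frobT_M3, M3_sub, M3_mul]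
    have e3 : frobT (tucker Q1⁻¹ Q2⁻¹ Q3⁻¹ F.S - Fs.S)
        = frob (M3 (tucker Q1⁻¹ Q2⁻¹ Q3⁻¹ F.S) - M3 Fs.S) := by
      rw [frobT_M3, M3_sub]
    rw [e2, e3] at h
    linarith

end ScaledGD
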